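/- Let E be the exterior algebra over ℂ on generators e₁,…,e₆ and let T = {{1,2,4},{1,3,5},{2,3,6},{4,5,6}} (the triangles of the complete graph K₄ with all positive edges, where edge labels 1..6 correspond to the edges of K₄). Then the span of the 12 elements e_t ∧ ∂e_S for S ∈ T, t ∈ [6]∖S has dimension 10 inside E³. -/
import Mathlib

open ExteriorAlgebra

/-- The standard generator `e i` of the exterior algebra `Λ(ℂ^6)`. -/
noncomputable def gen (i : Fin 6) : ExteriorAlgebra ℂ (Fin 6 → ℂ) :=
  ι ℂ (Pi.single i (1 : ℂ))

/-- `∂e_{ijk} = e_j ∧ e_k - e_i ∧ e_k + e_i ∧ e_j`. -/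
noncomputable def bdry (i j k : Fin 6) : ExteriorAlgebra ℂ (Fin 6 → ℂ) :=
  gen j * gen k - gen i * gen k + gen i * gen j

/-- The triangles (3-cycles) of the complete graph `K₄` with all positive edges, with edge
labels 1,…,6 relabelled 0,…,5: `{1,2,4}, {1,3,5}, {2,3,6}, {4,5,6}`. -/
def triangles : List (Fin 6 × Fin 6 × Fin 6) := [(0, 1, 3), (0, 2, 4), (1, 2, 5), (3, 4, 5)]

noncomputable abbrev EA := ExteriorAlgebra ℂ (Fin 6 → ℂ)

/-- sorted monomial -/
noncomputable def mw (a b c : Fin 6) : EA := gen a * (gen b * gen c)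

lemma gen_swap (i j : Fin 6) (_h : i < j) : gen j * gen i = -(gen i * gen j) := by
  refine eq_neg_of_add_eq_zero_left ?_
  exact ι_add_mul_swap (R := ℂ) (M := Fin 6 → ℂ) (Pi.single j (1:ℂ)) (Pi.single i (1:ℂ))

lemma gen_swap' (i j : Fin 6) (h : i < j) (x : EA) :
    gen j * (gen i * x) = -(gen i * (gen j * x)) := by
  rw [← mul_assoc, ← mul_assoc, gen_swap i j h, neg_mul]

lemma gen_sq (i : Fin 6) : gen i * gen i = 0 := ι_sq_zero _
lemma gen_sq' (i : Fin 6) (x : EA) : gen i * (gen i * x) = 0 := by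
  rw [← mul_assoc, gen_sq, zero_mul]

noncomputable def phi (s : Fin 3 → Fin 6) : EA →ₗ[ℂ] ℂ :=
  liftAlternating fun n => match n with
    | 3 => (Matrix.detRowAlternating (n := Fin 3) (R := ℂ)).compLinearMap (LinearMap.funLeft ℂ ℂ s)
    | _ => 0

lemma mw_eq_iotaMulti (a b c : Fin 6) :
    mw a b c = ιMulti ℂ 3 ![Pi.single a 1, Pi.single b 1, Pi.single c 1] := by
  simp [mw, gen, ιMulti_apply, List.ofFn_succ, mul_assoc]

lemma phi_mw (s : Fin 3 → Fin 6) (a b c : Fin 6) :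
    phi s (mw a b c) =
      Matrix.det (Matrix.of fun r c' => (Pi.single (![a, b, c] r) (1 : ℂ) : Fin 6 → ℂ) (s c')) := by
  rw [mw_eq_iotaMulti, phi, liftAlternating_apply_ιMulti]
  show (Matrix.detRowAlternating.compLinearMap (LinearMap.funLeft ℂ ℂ s)) _ = _
  rw [AlternatingMap.compLinearMap_apply]
  show Matrix.det _ = _
  congr 1
  funext r c'
  fin_cases r <;> simp [LinearMap.funLeft, Matrix.vecHead, Matrix.vecTail]

noncomputable def w : Fin 10 → EA
  | 0 => gen 2 * bdry 0 1 3
  | 1 => gen 4 * bdry 0 1 3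
  | 2 => gen 5 * bdry 0 1 3
  | 3 => gen 1 * bdry 0 2 4
  | 4 => gen 3 * bdry 0 2 4
  | 5 => gen 5 * bdry 0 2 4
  | 6 => gen 0 * bdry 1 2 5
  | 7 => gen 3 * bdry 1 2 5
  | 8 => gen 4 * bdry 1 2 5
  | 9 => gen 0 * bdry 3 4 5

lemma ew0 : w 0 = -(mw 1 2 3) + mw 0 2 3 + mw 0 1 2 := by
  show gen 2 * bdry 0 1 3 = _
  simp only [bdry, mw, mul_sub, mul_add, mul_neg, neg_mul, neg_neg, gen_sq, gen_sq',
    gen_swap, gen_swap', Fin.reduceLT]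
  try abel

lemma ew1 : w 1 = mw 1 3 4 - mw 0 3 4 + mw 0 1 4 := by
  show gen 4 * bdry 0 1 3 = _
  simp only [bdry, mw, mul_sub, mul_add, mul_neg, neg_mul, neg_neg, gen_sq, gen_sq',
    gen_swap, gen_swap', Fin.reduceLT]
  try abel

lemma ew2 : w 2 = mw 1 3 5 - mw 0 3 5 + mw 0 1 5 := by
  show gen 5 * bdry 0 1 3 = _
  simp only [bdry, mw, mul_sub, mul_add, mul_neg, neg_mul, neg_neg, gen_sq, gen_sq',
    gen_swap, gen_swap', Fin.reduceLT]
  try abel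

lemma ew3 : w 3 = mw 1 2 4 + mw 0 1 4 - mw 0 1 2 := by
  show gen 1 * bdry 0 2 4 = _
  simp only [bdry, mw, mul_sub, mul_add, mul_neg, neg_mul, neg_neg, gen_sq, gen_sq',
    gen_swap, gen_swap', Fin.reduceLT]
  try abel

lemma ew4 : w 4 = -(mw 2 3 4) + mw 0 3 4 + mw 0 2 3 := by
  show gen 3 * bdry 0 2 4 = _
  simp only [bdry, mw, mul_sub, mul_add, mul_neg, neg_mul, neg_neg, gen_sq, gen_sq',
    gen_swap, gen_swap', Fin.reduceLT]
  try abel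

lemma ew5 : w 5 = mw 2 4 5 - mw 0 4 5 + mw 0 2 5 := by
  show gen 5 * bdry 0 2 4 = _
  simp only [bdry, mw, mul_sub, mul_add, mul_neg, neg_mul, neg_neg, gen_sq, gen_sq',
    gen_swap, gen_swap', Fin.reduceLT]
  try abel

lemma ew6 : w 6 = mw 0 2 5 - mw 0 1 5 + mw 0 1 2 := by
  show gen 0 * bdry 1 2 5 = _
  simp only [bdry, mw, mul_sub, mul_add, mul_neg, neg_mul, neg_neg, gen_sq, gen_sq',
    gen_swap, gen_swap', Fin.reduceLT]
  try abel

lemma ew7 : w 7 = -(mw 2 3 5) + mw 1 3 5 + mw 1 2 3 := by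
  show gen 3 * bdry 1 2 5 = _
  simp only [bdry, mw, mul_sub, mul_add, mul_neg, neg_mul, neg_neg, gen_sq, gen_sq',
    gen_swap, gen_swap', Fin.reduceLT]
  try abel

lemma ew8 : w 8 = -(mw 2 4 5) + mw 1 4 5 + mw 1 2 4 := by
  show gen 4 * bdry 1 2 5 = _
  simp only [bdry, mw, mul_sub, mul_add, mul_neg, neg_mul, neg_neg, gen_sq, gen_sq',
    gen_swap, gen_swap', Fin.reduceLT]
  try abel

lemma ew9 : w 9 = mw 0 4 5 - mw 0 3 5 + mw 0 3 4 := by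
  show gen 0 * bdry 3 4 5 = _
  simp only [bdry, mw, mul_sub, mul_add, mul_neg, neg_mul, neg_neg, gen_sq, gen_sq',
    gen_swap, gen_swap', Fin.reduceLT]
  try abel

lemma rel10 : gen 1 * bdry 3 4 5 = w 1 - w 2 - w 3 + w 5 - w 6 + w 8 + w 9 := by
  rw [ew1, ew2, ew3, ew5, ew6, ew8, ew9]
  simp only [bdry, mw, mul_sub, mul_add, mul_neg, neg_mul, neg_neg, gen_sq, gen_sq',
    gen_swap, gen_swap', Fin.reduceLT]
  try abel

lemma rel11 : gen 2 * bdry 3 4 5 = w 0 - w 2 - w 4 + w 5 - w 6 + w 7 + w 9 := by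
  rw [ew0, ew2, ew4, ew5, ew6, ew7, ew9]
  simp only [bdry, mw, mul_sub, mul_add, mul_neg, neg_mul, neg_neg, gen_sq, gen_sq',
    gen_swap, gen_swap', Fin.reduceLT]
  try abel
@[simp] lemma finsucc_0_1 : Fin.succ (0 : Fin 1) = (1 : Fin 2) := rfl
@[simp] lemma finsucc_0_2 : Fin.succ (0 : Fin 2) = (1 : Fin 3) := rfl
@[simp] lemma finsucc_1_2 : Fin.succ (1 : Fin 2) = (2 : Fin 3) := rfl
@[simp] lemma finsucc_0_3 : Fin.succ (0 : Fin 3) = (1 : Fin 4) := rfl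
@[simp] lemma finsucc_1_3 : Fin.succ (1 : Fin 3) = (2 : Fin 4) := rfl
@[simp] lemma finsucc_2_3 : Fin.succ (2 : Fin 3) = (3 : Fin 4) := rfl
@[simp] lemma finsucc_0_4 : Fin.succ (0 : Fin 4) = (1 : Fin 5) := rfl
@[simp] lemma finsucc_1_4 : Fin.succ (1 : Fin 4) = (2 : Fin 5) := rfl
@[simp] lemma finsucc_2_4 : Fin.succ (2 : Fin 4) = (3 : Fin 5) := rfl
@[simp] lemma finsucc_3_4 : Fin.succ (3 : Fin 4) = (4 : Fin 5) := rfl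
@[simp] lemma finsucc_0_5 : Fin.succ (0 : Fin 5) = (1 : Fin 6) := rfl
@[simp] lemma finsucc_1_5 : Fin.succ (1 : Fin 5) = (2 : Fin 6) := rfl
@[simp] lemma finsucc_2_5 : Fin.succ (2 : Fin 5) = (3 : Fin 6) := rfl
@[simp] lemma finsucc_3_5 : Fin.succ (3 : Fin 5) = (4 : Fin 6) := rfl
@[simp] lemma finsucc_4_5 : Fin.succ (4 : Fin 5) = (5 : Fin 6) := rfl
@[simp] lemma finsucc_0_6 : Fin.succ (0 : Fin 6) = (1 : Fin 7) := rfl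
@[simp] lemma finsucc_1_6 : Fin.succ (1 : Fin 6) = (2 : Fin 7) := rfl
@[simp] lemma finsucc_2_6 : Fin.succ (2 : Fin 6) = (3 : Fin 7) := rfl
@[simp] lemma finsucc_3_6 : Fin.succ (3 : Fin 6) = (4 : Fin 7) := rfl
@[simp] lemma finsucc_4_6 : Fin.succ (4 : Fin 6) = (5 : Fin 7) := rfl
@[simp] lemma finsucc_5_6 : Fin.succ (5 : Fin 6) = (6 : Fin 7) := rfl
@[simp] lemma finsucc_0_7 : Fin.succ (0 : Fin 7) = (1 : Fin 8) := rfl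
@[simp] lemma finsucc_1_7 : Fin.succ (1 : Fin 7) = (2 : Fin 8) := rfl
@[simp] lemma finsucc_2_7 : Fin.succ (2 : Fin 7) = (3 : Fin 8) := rfl
@[simp] lemma finsucc_3_7 : Fin.succ (3 : Fin 7) = (4 : Fin 8) := rfl
@[simp] lemma finsucc_4_7 : Fin.succ (4 : Fin 7) = (5 : Fin 8) := rfl
@[simp] lemma finsucc_5_7 : Fin.succ (5 : Fin 7) = (6 : Fin 8) := rfl
@[simp] lemma finsucc_6_7 : Fin.succ (6 : Fin 7) = (7 : Fin 8) := rfl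
@[simp] lemma finsucc_0_8 : Fin.succ (0 : Fin 8) = (1 : Fin 9) := rfl
@[simp] lemma finsucc_1_8 : Fin.succ (1 : Fin 8) = (2 : Fin 9) := rfl
@[simp] lemma finsucc_2_8 : Fin.succ (2 : Fin 8) = (3 : Fin 9) := rfl
@[simp] lemma finsucc_3_8 : Fin.succ (3 : Fin 8) = (4 : Fin 9) := rfl
@[simp] lemma finsucc_4_8 : Fin.succ (4 : Fin 8) = (5 : Fin 9) := rfl
@[simp] lemma finsucc_5_8 : Fin.succ (5 : Fin 8) = (6 : Fin 9) := rfl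
@[simp] lemma finsucc_6_8 : Fin.succ (6 : Fin 8) = (7 : Fin 9) := rfl
@[simp] lemma finsucc_7_8 : Fin.succ (7 : Fin 8) = (8 : Fin 9) := rfl
@[simp] lemma finsucc_0_9 : Fin.succ (0 : Fin 9) = (1 : Fin 10) := rfl
@[simp] lemma finsucc_1_9 : Fin.succ (1 : Fin 9) = (2 : Fin 10) := rfl
@[simp] lemma finsucc_2_9 : Fin.succ (2 : Fin 9) = (3 : Fin 10) := rfl
@[simp] lemma finsucc_3_9 : Fin.succ (3 : Fin 9) = (4 : Fin 10) := rfl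
@[simp] lemma finsucc_4_9 : Fin.succ (4 : Fin 9) = (5 : Fin 10) := rfl
@[simp] lemma finsucc_5_9 : Fin.succ (5 : Fin 9) = (6 : Fin 10) := rfl
@[simp] lemma finsucc_6_9 : Fin.succ (6 : Fin 9) = (7 : Fin 10) := rfl
@[simp] lemma finsucc_7_9 : Fin.succ (7 : Fin 9) = (8 : Fin 10) := rfl
@[simp] lemma finsucc_8_9 : Fin.succ (8 : Fin 9) = (9 : Fin 10) := rfl

set_option maxHeartbeats 2000000 in
lemma w_li : LinearIndependent ℂ w := by
  rw [Fintype.linearIndependent_iff]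
  intro g h
  simp only [Fin.sum_univ_succ, Fin.sum_univ_zero, add_zero,
    finsucc_0_1, finsucc_0_2, finsucc_1_2, finsucc_0_3, finsucc_1_3, finsucc_2_3, finsucc_0_4, finsucc_1_4, finsucc_2_4, finsucc_3_4, finsucc_0_5, finsucc_1_5, finsucc_2_5, finsucc_3_5, finsucc_4_5, finsucc_0_6, finsucc_1_6, finsucc_2_6, finsucc_3_6, finsucc_4_6, finsucc_5_6, finsucc_0_7, finsucc_1_7, finsucc_2_7, finsucc_3_7, finsucc_4_7, finsucc_5_7, finsucc_6_7, finsucc_0_8, finsucc_1_8, finsucc_2_8, finsucc_3_8, finsucc_4_8, finsucc_5_8, finsucc_6_8, finsucc_7_8, finsucc_0_9, finsucc_1_9, finsucc_2_9, finsucc_3_9, finsucc_4_9, finsucc_5_9, finsucc_6_9, finsucc_7_9, finsucc_8_9,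
    ew0, ew1, ew2, ew3, ew4, ew5, ew6, ew7, ew8, ew9, smul_add, smul_sub, smul_neg] at h
  have E0 := congrArg (phi ![1,3,4]) h
  simp only [map_add, map_sub, map_neg, map_smul, map_zero, phi_mw, Matrix.det_fin_three,
    Matrix.of_apply, Matrix.cons_val_zero, Matrix.cons_val_one, Matrix.head_cons,
    Matrix.cons_val_two, Matrix.tail_cons, Pi.single_apply, smul_eq_mul, Fin.reduceEq,
    if_true, if_false, mul_zero, mul_one, mul_neg, neg_zero, add_zero, zero_add, sub_zero, zero_sub, neg_neg] at E0
  have E1 := congrArg (phi ![2,3,4]) h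
  simp only [map_add, map_sub, map_neg, map_smul, map_zero, phi_mw, Matrix.det_fin_three,
    Matrix.of_apply, Matrix.cons_val_zero, Matrix.cons_val_one, Matrix.head_cons,
    Matrix.cons_val_two, Matrix.tail_cons, Pi.single_apply, smul_eq_mul, Fin.reduceEq,
    if_true, if_false, mul_zero, mul_one, mul_neg, neg_zero, add_zero, zero_add, sub_zero, zero_sub, neg_neg] at E1
  norm_num at E1
  have E2 := congrArg (phi ![1,4,5]) h
  simp only [map_add, map_sub, map_neg, map_smul, map_zero, phi_mw, Matrix.det_fin_three,
    Matrix.of_apply, Matrix.cons_val_zero, Matrix.cons_val_one, Matrix.head_cons,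
    Matrix.cons_val_two, Matrix.tail_cons, Pi.single_apply, smul_eq_mul, Fin.reduceEq,
    if_true, if_false, mul_zero, mul_one, mul_neg, neg_zero, add_zero, zero_add, sub_zero, zero_sub, neg_neg] at E2
  have E3 := congrArg (phi ![2,3,5]) h
  simp only [map_add, map_sub, map_neg, map_smul, map_zero, phi_mw, Matrix.det_fin_three,
    Matrix.of_apply, Matrix.cons_val_zero, Matrix.cons_val_one, Matrix.head_cons,
    Matrix.cons_val_two, Matrix.tail_cons, Pi.single_apply, smul_eq_mul, Fin.reduceEq,
    if_true, if_false, mul_zero, mul_one, mul_neg, neg_zero, add_zero, zero_add, sub_zero, zero_sub, neg_neg] at E3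
  norm_num at E3
  have E4 := congrArg (phi ![0,1,4]) h
  simp only [map_add, map_sub, map_neg, map_smul, map_zero, phi_mw, Matrix.det_fin_three,
    Matrix.of_apply, Matrix.cons_val_zero, Matrix.cons_val_one, Matrix.head_cons,
    Matrix.cons_val_two, Matrix.tail_cons, Pi.single_apply, smul_eq_mul, Fin.reduceEq,
    if_true, if_false, mul_zero, mul_one, mul_neg, neg_zero, add_zero, zero_add, sub_zero, zero_sub, neg_neg] at E4
  have E5 := congrArg (phi ![1,2,3]) h
  simp only [map_add, map_sub, map_neg, map_smul, map_zero, phi_mw, Matrix.det_fin_three,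
    Matrix.of_apply, Matrix.cons_val_zero, Matrix.cons_val_one, Matrix.head_cons,
    Matrix.cons_val_two, Matrix.tail_cons, Pi.single_apply, smul_eq_mul, Fin.reduceEq,
    if_true, if_false, mul_zero, mul_one, mul_neg, neg_zero, add_zero, zero_add, sub_zero, zero_sub, neg_neg] at E5
  have E6 := congrArg (phi ![0,1,2]) h
  simp only [map_add, map_sub, map_neg, map_smul, map_zero, phi_mw, Matrix.det_fin_three,
    Matrix.of_apply, Matrix.cons_val_zero, Matrix.cons_val_one, Matrix.head_cons,
    Matrix.cons_val_two, Matrix.tail_cons, Pi.single_apply, smul_eq_mul, Fin.reduceEq,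
    if_true, if_false, mul_zero, mul_one, mul_neg, neg_zero, add_zero, zero_add, sub_zero, zero_sub, neg_neg] at E6
  have E7 := congrArg (phi ![0,2,5]) h
  simp only [map_add, map_sub, map_neg, map_smul, map_zero, phi_mw, Matrix.det_fin_three,
    Matrix.of_apply, Matrix.cons_val_zero, Matrix.cons_val_one, Matrix.head_cons,
    Matrix.cons_val_two, Matrix.tail_cons, Pi.single_apply, smul_eq_mul, Fin.reduceEq,
    if_true, if_false, mul_zero, mul_one, mul_neg, neg_zero, add_zero, zero_add, sub_zero, zero_sub, neg_neg] at E7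
  have E8 := congrArg (phi ![0,1,5]) h
  simp only [map_add, map_sub, map_neg, map_smul, map_zero, phi_mw, Matrix.det_fin_three,
    Matrix.of_apply, Matrix.cons_val_zero, Matrix.cons_val_one, Matrix.head_cons,
    Matrix.cons_val_two, Matrix.tail_cons, Pi.single_apply, smul_eq_mul, Fin.reduceEq,
    if_true, if_false, mul_zero, mul_one, mul_neg, neg_zero, add_zero, zero_add, sub_zero, zero_sub, neg_neg] at E8
  have E9 := congrArg (phi ![0,3,5]) h
  simp only [map_add, map_sub, map_neg, map_smul, map_zero, phi_mw, Matrix.det_fin_three,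
    Matrix.of_apply, Matrix.cons_val_zero, Matrix.cons_val_one, Matrix.head_cons,
    Matrix.cons_val_two, Matrix.tail_cons, Pi.single_apply, smul_eq_mul, Fin.reduceEq,
    if_true, if_false, mul_zero, mul_one, mul_neg, neg_zero, add_zero, zero_add, sub_zero, zero_sub, neg_neg] at E9
  intro i
  fin_cases i
  · show g 0 = 0
    linear_combination E3 - E5
  · show g 1 = 0
    linear_combination E0
  · show g 2 = 0
    linear_combination E8 + E6 - E3 + E5 + E4 - E0
  · show g 3 = 0
    linear_combination E4 - E0
  · show g 4 = 0
    linear_combination E1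
  · show g 5 = 0
    linear_combination E7 - E6 + E3 - E5 - E4 + E0
  · show g 6 = 0
    linear_combination E6 - E3 + E5 + E4 - E0
  · show g 7 = 0
    linear_combination E3
  · show g 8 = 0
    linear_combination E2
  · show g 9 = 0
    linear_combination -E9 - E8 - E6 + E3 - E5 - E4 + E0

/-- For the graph `K₄`, the span of the 12 elements `e_t ∧ ∂e_S`, for `S` a triangle of `K₄`
and `t ∉ S`, has dimension `10` inside `E³`. -/
theorem dim_span_F3_K4 :
    Module.finrank ℂ (Submodule.span ℂ
      {x : ExteriorAlgebra ℂ (Fin 6 → ℂ) |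
        ∃ p ∈ triangles, ∃ t : Fin 6, t ∉ ({p.1, p.2.1, p.2.2} : Finset (Fin 6)) ∧
          x = gen t * bdry p.1 p.2.1 p.2.2}) = 10 := by
  have hmem : ∀ i, w i ∈ Submodule.span ℂ (Set.range w) :=
    fun i => Submodule.subset_span ⟨i, rfl⟩
  have hspan : Submodule.span ℂ
      {x : ExteriorAlgebra ℂ (Fin 6 → ℂ) |
        ∃ p ∈ triangles, ∃ t : Fin 6, t ∉ ({p.1, p.2.1, p.2.2} : Finset (Fin 6)) ∧
          x = gen t * bdry p.1 p.2.1 p.2.2} = Submodule.span ℂ (Set.range w) := by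
    apply le_antisymm
    · rw [Submodule.span_le]
      rintro x ⟨p, hp, t, ht, rfl⟩
      simp only [triangles, List.mem_cons, List.not_mem_nil, or_false] at hp
      rcases hp with rfl | rfl | rfl | rfl
      · fin_cases t <;> first
          | exact absurd (by decide) ht
          | exact hmem 0
          | exact hmem 1
          | exact hmem 2
      · fin_cases t <;> first
          | exact absurd (by decide) ht
          | exact hmem 3
          | exact hmem 4
          | exact hmem 5
      · fin_cases t <;> first
          | exact absurd (by decide) ht
          | exact hmem 6
          | exact hmem 7
          | exact hmem 8
      · fin_cases t <;> first
          | exact absurd (by decide) ht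
          | exact hmem 9
          | (show gen 1 * bdry 3 4 5 ∈ _
             rw [rel10]
             exact add_mem (add_mem (sub_mem (add_mem (sub_mem (sub_mem (hmem 1) (hmem 2))
               (hmem 3)) (hmem 5)) (hmem 6)) (hmem 8)) (hmem 9))
          | (show gen 2 * bdry 3 4 5 ∈ _
             rw [rel11]
             exact add_mem (add_mem (sub_mem (add_mem (sub_mem (sub_mem (hmem 0) (hmem 2))
               (hmem 4)) (hmem 5)) (hmem 6)) (hmem 7)) (hmem 9))
    · rw [Submodule.span_le]
      rintro x ⟨i, rfl⟩
      apply Submodule.subset_span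
      fin_cases i
      · exact ⟨(0,1,3), by simp [triangles], 2, by decide, rfl⟩
      · exact ⟨(0,1,3), by simp [triangles], 4, by decide, rfl⟩
      · exact ⟨(0,1,3), by simp [triangles], 5, by decide, rfl⟩
      · exact ⟨(0,2,4), by simp [triangles], 1, by decide, rfl⟩
      · exact ⟨(0,2,4), by simp [triangles], 3, by decide, rfl⟩
      · exact ⟨(0,2,4), by simp [triangles], 5, by decide, rfl⟩
      · exact ⟨(1,2,5), by simp [triangles], 0, by decide, rfl⟩
      · exact ⟨(1,2,5), by simp [triangles], 3, by decide, rfl⟩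
      · exact ⟨(1,2,5), by simp [triangles], 4, by decide, rfl⟩
      · exact ⟨(3,4,5), by simp [triangles], 0, by decide, rfl⟩
  rw [hspan, finrank_span_eq_card w_li]
  simp
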